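/- Let f be a real-valued function on ℕ such that f(n)≥0 for all n and f², the function n↦f(n)², belongs to 𝒦⁻. Then every φ in the span of {ξ_n − ξ_{n+1} : n∈ℕ} satisfies φ ∈ D(f(N)²T_{f²}) ∩ D(T_{f²}f(N)); moreover, the operator f(N)T_{f²} + T_{f²}f(N), with domain D(f(N)T_{f²})∩D(T_{f²}f(N)), is symmetric. -/

import Mathlib

open Filter Topology
open scoped ENNReal

noncomputable section

abbrev l2 : Type := lp (fun _ : ℕ => ℂ) 2

def xi (n : ℕ) : l2 := lp.single 2 n 1

def FinSupp (φ : l2) : Prop := (Function.support (⇑φ : ℕ → ℂ)).Finite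

/-- The class 𝒦. -/
def MemK (f : ℕ → ℝ) : Prop := 0 < f 0 ∧ ∀ n, f n < f (n + 1)

/-- The class 𝒦⁻. -/
def MemKminus (f : ℕ → ℝ) : Prop := MemK f ∧ Summable (fun n => 1 / (f n) ^ 2)

def fsq (f : ℕ → ℝ) : ℕ → ℝ := fun n => (f n) ^ 2

/-- the sequence of the multiplication operator `f(N)` applied to φ -/
def mulSeq (f : ℕ → ℝ) (φ : ℕ → ℂ) : ℕ → ℂ := fun n => ((f n : ℝ) : ℂ) * φ n

/-- the sequence of `f(N)^p` applied to φ -/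
def powSeq (f : ℕ → ℝ) (p : ℕ) (φ : ℕ → ℂ) : ℕ → ℂ := fun n => (((f n) ^ p : ℝ) : ℂ) * φ n

/-- coordinates of `T_{f,m} φ`. -/
def TfmSeq (f : ℕ → ℝ) (m : ℕ) (φ : ℕ → ℂ) : ℕ → ℂ := fun n =>
  Complex.I * ∑ k ∈ Finset.Icc 1 m,
    ((if k ≤ n then φ (n - k) / ((f n - f (n - k) : ℝ) : ℂ) else 0)
      - φ (n + k) / ((f (n + k) - f n : ℝ) : ℂ))

/-- `(φ, ψ)` is in the graph of `T_f`. -/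
def InGraphTf (f : ℕ → ℝ) (φ ψ : l2) : Prop :=
  ∃ h : ∀ m, Memℓp (TfmSeq f m (⇑φ)) 2,
    Tendsto (fun m => (⟨TfmSeq f m (⇑φ), h m⟩ : l2)) atTop (𝓝 ψ)


/-- `(φ, ψ)` is in the graph of `S = f(N) T_{f²} + T_{f²} f(N)`, whose domain is
`D(f(N) T_{f²}) ∩ D(T_{f²} f(N))`. -/
def InGraphS (f : ℕ → ℝ) (φ ψ : l2) : Prop :=
  ∃ (T2φ T2Fφ : l2) (hF : Memℓp (mulSeq f ⇑φ) 2) (hFT : Memℓp (mulSeq f ⇑T2φ) 2),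
    InGraphTf (fsq f) φ T2φ ∧
    InGraphTf (fsq f) (⟨mulSeq f ⇑φ, hF⟩ : l2) T2Fφ ∧
    ψ = (⟨mulSeq f ⇑T2φ, hFT⟩ : l2) + T2Fφ
/-! ### auxiliary lemmas -/

lemma s18_coe_mk (x : ℕ → ℂ) (h : Memℓp x 2) : (⇑(⟨x, h⟩ : l2) : ℕ → ℂ) = x := rfl

lemma s18_memℓp_of_sq {g : ℕ → ℂ} (h : Summable fun n => ‖g n‖ ^ 2) : Memℓp g 2 := by
  apply memℓp_gen
  have : (2 : ℝ≥0∞).toReal = ((2 : ℕ) : ℝ) := by simp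
  rw [this]
  simpa only [Real.rpow_natCast] using h

lemma s18_sq_of_memℓp {g : ℕ → ℂ} (h : Memℓp g 2) : Summable fun n => ‖g n‖ ^ 2 := by
  have := h.summable (p := 2) (by simp)
  have h2 : (2 : ℝ≥0∞).toReal = ((2 : ℕ) : ℝ) := by simp
  rw [h2] at this
  simpa only [Real.rpow_natCast] using this

lemma s18_xi_apply (j n : ℕ) : (⇑(xi j) : ℕ → ℂ) n = if n = j then 1 else 0 := by
  by_cases h : n = j
  · subst h; simp [xi, lp.single_apply_self]
  · simp [xi, lp.single_apply_ne _ _ _ h, h]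

section Kminus

variable {F : ℕ → ℝ} (hK : MemKminus F)

lemma s18_Fmono (hK : MemKminus F) : StrictMono F :=
  strictMono_nat_of_lt_succ hK.1.2

lemma s18_Fpos (hK : MemKminus F) (n : ℕ) : 0 < F n :=
  lt_of_lt_of_le hK.1.1 ((s18_Fmono hK).monotone (Nat.zero_le n))

lemma s18_Ftop (hK : MemKminus F) : Tendsto F atTop atTop := by
  apply tendsto_atTop_atTop_of_monotone (s18_Fmono hK).monotone
  by_contra hb
  push_neg at hb
  obtain ⟨b, hb⟩ := hb
  have h0 : Tendsto (fun n => 1 / F n ^ 2) atTop (𝓝 0) := hK.2.tendsto_atTop_zero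
  have hble : ∀ n, 1 / b ^ 2 ≤ 1 / F n ^ 2 := by
    intro n
    have h1 : F n < b := hb n
    have h2 : 0 < F n := s18_Fpos hK n
    apply one_div_le_one_div_of_le (by positivity)
    exact pow_le_pow_left₀ h2.le h1.le 2
  have : (0:ℝ) < 1 / b ^ 2 := by
    have : 0 < b := lt_trans (s18_Fpos hK 0) (hb 0)
    positivity
  have := le_of_tendsto_of_tendsto' tendsto_const_nhds h0 hble
  linarith

lemma s18_memℓp_of_bound (hK : MemKminus F) {g : ℕ → ℂ} {c : ℝ} (hb : ∀ᶠ n in atTop, ‖g n‖ ≤ c / F n) :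
    Memℓp g 2 := by
  obtain ⟨N₀, hN₀⟩ := eventually_atTop.1 hb
  apply s18_memℓp_of_sq
  rw [← summable_nat_add_iff N₀]
  have hsum : Summable fun n => c ^ 2 * (1 / F (n + N₀) ^ 2) := by
    apply Summable.mul_left
    have := (summable_nat_add_iff (f := fun n => 1 / F n ^ 2) N₀).2 hK.2
    exact this
  apply Summable.of_nonneg_of_le (fun n => by positivity) _ hsum
  intro n
  have h1 : ‖g (n + N₀)‖ ≤ c / F (n + N₀) := hN₀ _ (Nat.le_add_left _ _)
  have h2 : 0 < F (n + N₀) := s18_Fpos hK _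
  calc ‖g (n + N₀)‖ ^ 2 ≤ (c / F (n + N₀)) ^ 2 :=
        pow_le_pow_left₀ (norm_nonneg _) h1 2
    _ = c ^ 2 * (1 / F (n + N₀) ^ 2) := by field_simp
end Kminus
section Kminus2

variable {F : ℕ → ℝ}

def s18_tau (F : ℕ → ℝ) (j : ℕ) : ℕ → ℂ := fun n =>
  if n = j then 0 else Complex.I / ((F n - F j : ℝ) : ℂ)

lemma s18_tau_bound (hK : MemKminus F) (j : ℕ) :
    ∀ᶠ n in atTop, ‖s18_tau F j n‖ ≤ 2 / F n := by
  filter_upwards [(s18_Ftop hK).eventually_ge_atTop (2 * F j),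
    eventually_gt_atTop j] with n h1 h2
  have hFj : 0 < F j := s18_Fpos hK j
  have hFn : 0 < F n := s18_Fpos hK n
  have hd : 0 < F n - F j := by linarith
  rw [s18_tau, if_neg (by omega : ¬ n = j)]
  rw [norm_div, Complex.norm_I, Complex.norm_real, Real.norm_eq_abs, abs_of_pos hd]
  rw [div_le_div_iff₀ hd hFn]
  linarith

lemma s18_tau_memℓp (hK : MemKminus F) (j : ℕ) : Memℓp (s18_tau F j) 2 :=
  s18_memℓp_of_bound hK (s18_tau_bound hK j)

lemma s18_TfmSeq_xi (m j : ℕ) :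
    TfmSeq F m (⇑(xi j)) = fun n =>
      if n ∈ Finset.Icc (j - m) (j + m) then s18_tau F j n else 0 := by
  funext n
  show Complex.I * ∑ k ∈ Finset.Icc 1 m,
    ((if k ≤ n then (⇑(xi j) : ℕ → ℂ) (n - k) / ((F n - F (n - k) : ℝ) : ℂ) else 0)
      - (⇑(xi j) : ℕ → ℂ) (n + k) / ((F (n + k) - F n : ℝ) : ℂ)) = _
  rcases lt_trichotomy n j with hnj | rfl | hjn
  · -- n < j
    have hterm : ∀ k ∈ Finset.Icc 1 m,
        ((if k ≤ n then (⇑(xi j) : ℕ → ℂ) (n - k) / ((F n - F (n - k) : ℝ) : ℂ) else 0)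
          - (⇑(xi j) : ℕ → ℂ) (n + k) / ((F (n + k) - F n : ℝ) : ℂ))
        = if k = j - n then -(1 / ((F j - F n : ℝ) : ℂ)) else 0 := by
      intro k hk
      simp only [Finset.mem_Icc] at hk
      rw [s18_xi_apply, s18_xi_apply]
      have h1 : (if k ≤ n then (if n - k = j then (1:ℂ) else 0) / ((F n - F (n - k) : ℝ) : ℂ)
          else 0) = 0 := by
        by_cases hkn : k ≤ n
        · rw [if_pos hkn, if_neg (by omega : ¬ n - k = j), zero_div]
        · rw [if_neg hkn]
      rw [h1, zero_sub]
      by_cases h2 : n + k = j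
      · rw [if_pos h2, h2, if_pos (by omega : k = j - n)]
      · rw [if_neg h2, zero_div, neg_zero, if_neg (by omega : ¬ k = j - n)]
    rw [Finset.sum_congr rfl hterm, Finset.sum_ite_eq' (Finset.Icc 1 m) (j - n)
      (fun _ => -(1 / ((F j - F n : ℝ) : ℂ)))]
    simp only [Finset.mem_Icc]
    rw [if_congr (show (1 ≤ j - n ∧ j - n ≤ m) ↔ (j - m ≤ n ∧ n ≤ j + m) by omega) rfl rfl]
    split_ifs with h
    · rw [s18_tau, if_neg (by omega : ¬ n = j)]
      have hc : ((F n - F j : ℝ) : ℂ) = -((F j - F n : ℝ) : ℂ) := by push_cast; ring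
      rw [hc]
      ring
    · ring
  · -- n = j
    have hterm : ∀ k ∈ Finset.Icc 1 m,
        ((if k ≤ n then (⇑(xi n) : ℕ → ℂ) (n - k) / ((F n - F (n - k) : ℝ) : ℂ) else 0)
          - (⇑(xi n) : ℕ → ℂ) (n + k) / ((F (n + k) - F n : ℝ) : ℂ)) = 0 := by
      intro k hk
      simp only [Finset.mem_Icc] at hk
      rw [s18_xi_apply, s18_xi_apply]
      rw [if_neg (by omega : ¬ n + k = n), zero_div, sub_zero]
      by_cases hkn : k ≤ n
      · rw [if_pos hkn, if_neg (by omega : ¬ n - k = n), zero_div]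
      · rw [if_neg hkn]
    rw [Finset.sum_congr rfl hterm, Finset.sum_const_zero, mul_zero]
    simp [s18_tau]
  · -- j < n
    have hterm : ∀ k ∈ Finset.Icc 1 m,
        ((if k ≤ n then (⇑(xi j) : ℕ → ℂ) (n - k) / ((F n - F (n - k) : ℝ) : ℂ) else 0)
          - (⇑(xi j) : ℕ → ℂ) (n + k) / ((F (n + k) - F n : ℝ) : ℂ))
        = if k = n - j then 1 / ((F n - F j : ℝ) : ℂ) else 0 := by
      intro k hk
      simp only [Finset.mem_Icc] at hk
      rw [s18_xi_apply, s18_xi_apply]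
      rw [if_neg (by omega : ¬ n + k = j), zero_div, sub_zero]
      by_cases hkn : k ≤ n
      · rw [if_pos hkn]
        by_cases h3 : k = n - j
        · have hnk : n - k = j := by omega
          rw [hnk, if_pos rfl, if_pos h3]
        · rw [if_neg (by omega : ¬ n - k = j), zero_div, if_neg h3]
      · rw [if_neg hkn, if_neg (by omega : ¬ k = n - j)]
    rw [Finset.sum_congr rfl hterm, Finset.sum_ite_eq' (Finset.Icc 1 m) (n - j)
      (fun _ => 1 / ((F n - F j : ℝ) : ℂ))]
    simp only [Finset.mem_Icc]
    rw [if_congr (show (1 ≤ n - j ∧ n - j ≤ m) ↔ (j - m ≤ n ∧ n ≤ j + m) by omega) rfl rfl]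
    split_ifs with h
    · rw [s18_tau, if_neg (by omega : ¬ n = j), mul_one_div]
    · ring

lemma s18_TfmSeq_xi_memℓp (hK : MemKminus F) (m j : ℕ) :
    Memℓp (TfmSeq F m (⇑(xi j))) 2 := by
  apply s18_memℓp_of_bound hK (c := 2)
  filter_upwards [s18_tau_bound hK j, eventually_gt_atTop 0] with n h1 _
  rw [s18_TfmSeq_xi]
  dsimp only
  split_ifs
  · exact h1
  · rw [norm_zero]
    have := s18_Fpos hK n
    positivity

lemma s18_single_apply (i n : ℕ) (a : ℂ) :
    (⇑(lp.single 2 i a : l2) : ℕ → ℂ) n = if n = i then a else 0 := by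
  by_cases h : n = i
  · subst h; simp [lp.single_apply_self]
  · simp [lp.single_apply_ne _ _ _ h, h]

lemma s18_graph_xi (hK : MemKminus F) (j : ℕ) :
    InGraphTf F (xi j) ⟨s18_tau F j, s18_tau_memℓp hK j⟩ := by
  refine ⟨fun m => s18_TfmSeq_xi_memℓp hK m j, ?_⟩
  have hs : HasSum (fun i : ℕ => lp.single 2 i (s18_tau F j i))
      (⟨s18_tau F j, s18_tau_memℓp hK j⟩ : l2) := by
    have := lp.hasSum_single (E := fun _ : ℕ => ℂ) ENNReal.ofNat_ne_top
      (⟨s18_tau F j, s18_tau_memℓp hK j⟩ : l2)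
    exact this
  have hmono : Monotone (fun m : ℕ => Finset.Icc (j - m) (j + m)) := by
    intro a b hab
    apply Finset.Icc_subset_Icc <;> omega
  have htend : Tendsto (fun m : ℕ => Finset.Icc (j - m) (j + m)) atTop atTop :=
    tendsto_atTop_finset_of_monotone hmono
      (fun x => ⟨j + x, by simp only [Finset.mem_Icc]; omega⟩)
  have hcomp : Tendsto (fun m : ℕ => ∑ i ∈ Finset.Icc (j - m) (j + m),
      lp.single 2 i (s18_tau F j i)) atTop (𝓝 (⟨s18_tau F j, s18_tau_memℓp hK j⟩ : l2)) :=
    hs.comp htend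
  convert hcomp using 2 with m
  apply lp.ext
  funext n
  rw [s18_coe_mk, s18_TfmSeq_xi]
  rw [lp.coeFn_sum, Finset.sum_apply]
  rw [Finset.sum_congr rfl (fun i _ => s18_single_apply i n (s18_tau F j i))]
  rw [Finset.sum_ite_eq (Finset.Icc (j - m) (j + m)) n (fun i => s18_tau F j i)]

end Kminus2
section Algebra

lemma s18_TfmSeq_add (G : ℕ → ℝ) (m : ℕ) (φ ψ : ℕ → ℂ) :
    TfmSeq G m (φ + ψ) = TfmSeq G m φ + TfmSeq G m ψ := by
  funext n
  simp only [TfmSeq, Pi.add_apply]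
  rw [← mul_add, ← Finset.sum_add_distrib]
  congr 1
  apply Finset.sum_congr rfl
  intro k _
  split_ifs <;> ring

lemma s18_TfmSeq_smul (G : ℕ → ℝ) (m : ℕ) (c : ℂ) (φ : ℕ → ℂ) :
    TfmSeq G m (c • φ) = c • TfmSeq G m φ := by
  funext n
  simp only [TfmSeq, Pi.smul_apply, smul_eq_mul]
  have hterm : ∀ k ∈ Finset.Icc 1 m,
      ((if k ≤ n then c * φ (n - k) / ((G n - G (n - k) : ℝ) : ℂ) else 0)
        - c * φ (n + k) / ((G (n + k) - G n : ℝ) : ℂ))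
      = c * ((if k ≤ n then φ (n - k) / ((G n - G (n - k) : ℝ) : ℂ) else 0)
        - φ (n + k) / ((G (n + k) - G n : ℝ) : ℂ)) := by
    intro k _
    split_ifs <;> ring
  rw [Finset.sum_congr rfl hterm, ← Finset.mul_sum]
  ring

lemma s18_TfmSeq_zero (G : ℕ → ℝ) (m : ℕ) : TfmSeq G m (0 : ℕ → ℂ) = 0 := by
  funext n
  simp [TfmSeq]

lemma s18_graph_zero (G : ℕ → ℝ) : InGraphTf G 0 0 := by
  have h0 : ∀ m, TfmSeq G m (⇑(0 : l2)) = 0 := by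
    intro m
    rw [lp.coeFn_zero, s18_TfmSeq_zero]
  have hmem : ∀ m, Memℓp (TfmSeq G m (⇑(0 : l2))) 2 := fun m => (h0 m) ▸ zero_memℓp
  refine ⟨hmem, ?_⟩
  have goal_eq : (fun m => (⟨TfmSeq G m (⇑(0 : l2)), hmem m⟩ : l2)) = fun _ => (0 : l2) := by
    funext m
    apply lp.ext
    rw [s18_coe_mk, h0, lp.coeFn_zero]
  rw [goal_eq]
  exact tendsto_const_nhds

lemma s18_graph_add {G : ℕ → ℝ} {x₁ x₂ y₁ y₂ : l2} (h₁ : InGraphTf G x₁ y₁)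
    (h₂ : InGraphTf G x₂ y₂) : InGraphTf G (x₁ + x₂) (y₁ + y₂) := by
  obtain ⟨hm₁, ht₁⟩ := h₁
  obtain ⟨hm₂, ht₂⟩ := h₂
  have hco : ∀ m, TfmSeq G m (⇑(x₁ + x₂)) = TfmSeq G m ⇑x₁ + TfmSeq G m ⇑x₂ := by
    intro m
    rw [lp.coeFn_add, s18_TfmSeq_add]
  have hmem : ∀ m, Memℓp (TfmSeq G m (⇑(x₁ + x₂))) 2 :=
    fun m => (hco m) ▸ ((hm₁ m).add (hm₂ m))
  refine ⟨hmem, ?_⟩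
  have goal_eq : (fun m => (⟨TfmSeq G m (⇑(x₁ + x₂)), hmem m⟩ : l2)) =
      fun m => ((⟨TfmSeq G m ⇑x₁, hm₁ m⟩ : l2) + (⟨TfmSeq G m ⇑x₂, hm₂ m⟩ : l2)) := by
    funext m
    apply lp.ext
    rw [s18_coe_mk, hco m, lp.coeFn_add]
  rw [goal_eq]
  exact ht₁.add ht₂

lemma s18_graph_smul {G : ℕ → ℝ} {x y : l2} (c : ℂ) (h : InGraphTf G x y) :
    InGraphTf G (c • x) (c • y) := by
  obtain ⟨hm, ht⟩ := h
  have hco : ∀ m, TfmSeq G m (⇑(c • x)) = c • TfmSeq G m ⇑x := by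
    intro m
    rw [lp.coeFn_smul, s18_TfmSeq_smul]
  have hmem : ∀ m, Memℓp (TfmSeq G m (⇑(c • x))) 2 :=
    fun m => (hco m) ▸ ((hm m).const_smul c)
  refine ⟨hmem, ?_⟩
  have goal_eq : (fun m => (⟨TfmSeq G m (⇑(c • x)), hmem m⟩ : l2)) =
      fun m => (c • (⟨TfmSeq G m ⇑x, hm m⟩ : l2)) := by
    funext m
    apply lp.ext
    rw [s18_coe_mk, hco m, lp.coeFn_smul]
  rw [goal_eq]
  exact ht.const_smul c

lemma s18_graph_sub {G : ℕ → ℝ} {x₁ x₂ y₁ y₂ : l2} (h₁ : InGraphTf G x₁ y₁)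
    (h₂ : InGraphTf G x₂ y₂) : InGraphTf G (x₁ - x₂) (y₁ - y₂) := by
  have := s18_graph_add h₁ (s18_graph_smul (-1 : ℂ) h₂)
  rwa [neg_one_smul, neg_one_smul, ← sub_eq_add_neg, ← sub_eq_add_neg] at this

lemma s18_mulSeq_add (g : ℕ → ℝ) (φ ψ : ℕ → ℂ) :
    mulSeq g (φ + ψ) = mulSeq g φ + mulSeq g ψ := by
  funext n
  simp only [mulSeq, Pi.add_apply]
  ring

lemma s18_mulSeq_smul (g : ℕ → ℝ) (c : ℂ) (φ : ℕ → ℂ) :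
    mulSeq g (c • φ) = c • mulSeq g φ := by
  funext n
  simp only [mulSeq, Pi.smul_apply, smul_eq_mul]
  ring

lemma s18_mulSeq_zero (g : ℕ → ℝ) : mulSeq g (0 : ℕ → ℂ) = 0 := by
  funext n
  simp [mulSeq]

end Algebra
section Part1

variable {F : ℕ → ℝ}

lemma s18_mulSeq_sub (g : ℕ → ℝ) (φ ψ : ℕ → ℂ) :
    mulSeq g (φ - ψ) = mulSeq g φ - mulSeq g ψ := by
  funext n
  simp only [mulSeq, Pi.sub_apply]
  ring

lemma s18_mulSeq_tau_diff (hK : MemKminus F) (j : ℕ) :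
    Memℓp (mulSeq F (s18_tau F j - s18_tau F (j + 1))) 2 := by
  apply s18_memℓp_of_bound hK (c := 4 * (F (j + 1) - F j))
  filter_upwards [(s18_Ftop hK).eventually_ge_atTop (2 * F (j + 1)),
    eventually_gt_atTop (j + 1)] with n h1 h2
  have hFj : F j < F (j + 1) := hK.1.2 j
  have hF0 : 0 < F j := s18_Fpos hK j
  have hFn : 0 < F n := s18_Fpos hK n
  have hd1 : 0 < F n - F j := by linarith
  have hd2 : 0 < F n - F (j + 1) := by linarith
  have ha : ((F n - F j : ℝ) : ℂ) ≠ 0 := Complex.ofReal_ne_zero.mpr hd1.ne'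
  have hb : ((F n - F (j + 1) : ℝ) : ℂ) ≠ 0 := Complex.ofReal_ne_zero.mpr hd2.ne'
  have e : mulSeq F (s18_tau F j - s18_tau F (j + 1)) n
      = ((F n : ℝ) : ℂ) * ((Complex.I * (((F n - F (j + 1)) : ℝ) : ℂ)
          - (((F n - F j) : ℝ) : ℂ) * Complex.I) /
        ((((F n - F j) : ℝ) : ℂ) * (((F n - F (j + 1)) : ℝ) : ℂ))) := by
    simp only [mulSeq, Pi.sub_apply, s18_tau, if_neg (show ¬ n = j by omega),
      if_neg (show ¬ n = j + 1 by omega)]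
    rw [div_sub_div _ _ ha hb]
  rw [e]
  have e2 : (Complex.I * (((F n - F (j + 1)) : ℝ) : ℂ) - (((F n - F j) : ℝ) : ℂ) * Complex.I)
      = Complex.I * (((F j - F (j + 1) : ℝ)) : ℂ) := by push_cast; ring
  rw [e2]
  rw [norm_mul, norm_div, norm_mul, norm_mul, Complex.norm_I, one_mul]
  simp only [Complex.norm_real, Real.norm_eq_abs]
  rw [abs_of_pos hFn, abs_of_pos hd1, abs_of_pos hd2,
    abs_of_neg (show F j - F (j + 1) < 0 by linarith)]
  have k1 : F n / 2 ≤ F n - F j := by linarith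
  have k2 : F n / 2 ≤ F n - F (j + 1) := by linarith
  have k3 : F n / 2 * (F n / 2) ≤ (F n - F j) * (F n - F (j + 1)) :=
    mul_le_mul k1 k2 (by positivity) (by positivity)
  have hP : 0 < (F n - F j) * (F n - F (j + 1)) := by positivity
  rw [← mul_div_assoc, div_le_div_iff₀ hP hFn]
  nlinarith [mul_le_mul_of_nonneg_left k3 (show (0:ℝ) ≤ 4 * (F (j + 1) - F j) by linarith)]

lemma s18_mulSeq_xi (g : ℕ → ℝ) (j : ℕ) :
    mulSeq g (⇑(xi j)) = ((g j : ℝ) : ℂ) • (⇑(xi j) : ℕ → ℂ) := by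
  funext n
  simp only [mulSeq, Pi.smul_apply, smul_eq_mul, s18_xi_apply]
  split_ifs with h
  · subst h; ring
  · ring

lemma s18_part1a (hK : MemKminus F) (j : ℕ) :
    ∃ Tφ : l2, InGraphTf F (xi j - xi (j + 1)) Tφ ∧ Memℓp (mulSeq F ⇑Tφ) 2 := by
  refine ⟨(⟨s18_tau F j, s18_tau_memℓp hK j⟩ : l2) - ⟨s18_tau F (j + 1), s18_tau_memℓp hK (j + 1)⟩,
    s18_graph_sub (s18_graph_xi hK j) (s18_graph_xi hK (j + 1)), ?_⟩
  have hco : ⇑((⟨s18_tau F j, s18_tau_memℓp hK j⟩ : l2)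
      - ⟨s18_tau F (j + 1), s18_tau_memℓp hK (j + 1)⟩) = s18_tau F j - s18_tau F (j + 1) := by
    rw [lp.coeFn_sub]
  rw [hco]
  exact s18_mulSeq_tau_diff hK j

lemma s18_part1b (f : ℕ → ℝ) (hK : MemKminus (fsq f)) (j : ℕ) :
    ∃ hF : Memℓp (mulSeq f ⇑(xi j - xi (j + 1))) 2, ∃ ψ : l2,
      InGraphTf (fsq f) (⟨mulSeq f ⇑(xi j - xi (j + 1)), hF⟩ : l2) ψ := by
  set z : l2 := ((f j : ℝ) : ℂ) • xi j - ((f (j + 1) : ℝ) : ℂ) • xi (j + 1) with hz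
  have hco : mulSeq f ⇑(xi j - xi (j + 1)) = ⇑z := by
    rw [lp.coeFn_sub, s18_mulSeq_sub, s18_mulSeq_xi, s18_mulSeq_xi, hz, lp.coeFn_sub,
      lp.coeFn_smul, lp.coeFn_smul]
  have hF : Memℓp (mulSeq f ⇑(xi j - xi (j + 1))) 2 := by
    rw [hco]; exact lp.memℓp z
  refine ⟨hF, ((f j : ℝ) : ℂ) • (⟨s18_tau (fsq f) j, s18_tau_memℓp hK j⟩ : l2)
    - ((f (j + 1) : ℝ) : ℂ) • ⟨s18_tau (fsq f) (j + 1), s18_tau_memℓp hK (j + 1)⟩, ?_⟩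
  have hzeq : (⟨mulSeq f ⇑(xi j - xi (j + 1)), hF⟩ : l2) = z := by
    apply lp.ext
    rw [s18_coe_mk, hco]
  rw [hzeq, hz]
  exact s18_graph_sub (s18_graph_smul _ (s18_graph_xi hK j))
    (s18_graph_smul _ (s18_graph_xi hK (j + 1)))

lemma s18_part1_main (f : ℕ → ℝ) (hf : MemKminus (fsq f)) :
    ∀ φ : l2, φ ∈ Submodule.span ℂ (Set.range fun n : ℕ => xi n - xi (n + 1)) →
      (∃ Tφ : l2, InGraphTf (fsq f) φ Tφ ∧ Memℓp (mulSeq (fsq f) ⇑Tφ) 2) ∧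
      (∃ hF : Memℓp (mulSeq f ⇑φ) 2, ∃ ψ : l2,
        InGraphTf (fsq f) (⟨mulSeq f ⇑φ, hF⟩ : l2) ψ) := by
  intro φ hφ
  induction hφ using Submodule.span_induction with
  | mem x hx =>
    obtain ⟨j, rfl⟩ := hx
    exact ⟨s18_part1a hf j, s18_part1b f hf j⟩
  | zero =>
    constructor
    · refine ⟨0, s18_graph_zero _, ?_⟩
      have : mulSeq (fsq f) ⇑(0 : l2) = 0 := by rw [lp.coeFn_zero, s18_mulSeq_zero]
      rw [this]; exact zero_memℓp
    · have hF : Memℓp (mulSeq f ⇑(0 : l2)) 2 := by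
        rw [lp.coeFn_zero, s18_mulSeq_zero]; exact zero_memℓp
      refine ⟨hF, 0, ?_⟩
      have : (⟨mulSeq f ⇑(0 : l2), hF⟩ : l2) = 0 := by
        apply lp.ext; rw [s18_coe_mk, lp.coeFn_zero, s18_mulSeq_zero]
      rw [this]
      exact s18_graph_zero _
  | add x y hx hy px py =>
    obtain ⟨⟨Tx, hTx, hTxm⟩, ⟨hFx, ψx, hψx⟩⟩ := px
    obtain ⟨⟨Ty, hTy, hTym⟩, ⟨hFy, ψy, hψy⟩⟩ := py
    constructor
    · refine ⟨Tx + Ty, s18_graph_add hTx hTy, ?_⟩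
      have : mulSeq (fsq f) ⇑(Tx + Ty) = mulSeq (fsq f) ⇑Tx + mulSeq (fsq f) ⇑Ty := by
        rw [lp.coeFn_add, s18_mulSeq_add]
      rw [this]; exact hTxm.add hTym
    · have hco : mulSeq f ⇑(x + y) = mulSeq f ⇑x + mulSeq f ⇑y := by
        rw [lp.coeFn_add, s18_mulSeq_add]
      have hF : Memℓp (mulSeq f ⇑(x + y)) 2 := by rw [hco]; exact hFx.add hFy
      refine ⟨hF, ψx + ψy, ?_⟩
      have : (⟨mulSeq f ⇑(x + y), hF⟩ : l2)
          = (⟨mulSeq f ⇑x, hFx⟩ : l2) + ⟨mulSeq f ⇑y, hFy⟩ := by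
        apply lp.ext; rw [s18_coe_mk, hco, lp.coeFn_add]
      rw [this]
      exact s18_graph_add hψx hψy
  | smul a x hx px =>
    obtain ⟨⟨Tx, hTx, hTxm⟩, ⟨hFx, ψx, hψx⟩⟩ := px
    constructor
    · refine ⟨a • Tx, s18_graph_smul a hTx, ?_⟩
      have : mulSeq (fsq f) ⇑(a • Tx) = a • mulSeq (fsq f) ⇑Tx := by
        rw [lp.coeFn_smul, s18_mulSeq_smul]
      rw [this]; exact hTxm.const_smul a
    · have hco : mulSeq f ⇑(a • x) = a • mulSeq f ⇑x := by
        rw [lp.coeFn_smul, s18_mulSeq_smul]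
      have hF : Memℓp (mulSeq f ⇑(a • x)) 2 := by rw [hco]; exact hFx.const_smul a
      refine ⟨hF, a • ψx, ?_⟩
      have : (⟨mulSeq f ⇑(a • x), hF⟩ : l2) = a • (⟨mulSeq f ⇑x, hFx⟩ : l2) := by
        apply lp.ext; rw [s18_coe_mk, hco, lp.coeFn_smul]
      rw [this]
      exact s18_graph_smul a hψx

end Part1
section Part2

def s18_w (f : ℕ → ℝ) (φ ψ : ℕ → ℂ) (k a : ℕ) : ℂ :=
  ((starRingEnd ℂ) (φ a) * ψ (a + k) + (starRingEnd ℂ) (φ (a + k)) * ψ a) /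
    ((f (a + k) - f a : ℝ) : ℂ)

def s18_d (f : ℕ → ℝ) (m : ℕ) (φ ψ : ℕ → ℂ) (n : ℕ) : ℂ :=
  (starRingEnd ℂ) (TfmSeq (fsq f) m φ n) * (mulSeq f ψ n)
  + (starRingEnd ℂ) (TfmSeq (fsq f) m (mulSeq f φ) n) * ψ n
  - (starRingEnd ℂ) (mulSeq f φ n) * TfmSeq (fsq f) m ψ n
  - (starRingEnd ℂ) (φ n) * TfmSeq (fsq f) m (mulSeq f ψ) n

def s18_B (f : ℕ → ℝ) (m : ℕ) (φ ψ : ℕ → ℂ) (N : ℕ) : ℂ :=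
  Complex.I * ∑ k ∈ Finset.Icc 1 m, ∑ a ∈ Finset.Ico (N - k) N, s18_w f φ ψ k a

variable {f : ℕ → ℝ}

lemma s18_alg1 (A B C P Q R x y z : ℂ) (h2 : y + x ≠ 0) (h4 : z + y ≠ 0) :
    -Complex.I * (A / ((y - x) * (y + x)) - C / ((z - y) * (z + y))) * (y * Q)
      + -Complex.I * (x * A / ((y - x) * (y + x)) - z * C / ((z - y) * (z + y))) * Q
      - y * B * (Complex.I * (P / ((y - x) * (y + x)) - R / ((z - y) * (z + y))))
      - B * (Complex.I * (x * P / ((y - x) * (y + x)) - z * R / ((z - y) * (z + y))))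
    = Complex.I * ((B * R + C * Q) / (z - y) - (A * Q + B * P) / (y - x)) := by
  have e : -Complex.I * (A / ((y - x) * (y + x)) - C / ((z - y) * (z + y))) * (y * Q)
      + -Complex.I * (x * A / ((y - x) * (y + x)) - z * C / ((z - y) * (z + y))) * Q
      - y * B * (Complex.I * (P / ((y - x) * (y + x)) - R / ((z - y) * (z + y))))
      - B * (Complex.I * (x * P / ((y - x) * (y + x)) - z * R / ((z - y) * (z + y))))
      = (-Complex.I * (A * Q + B * P) * (y + x)) / ((y - x) * (y + x))
        + (Complex.I * (B * R + C * Q) * (z + y)) / ((z - y) * (z + y)) := by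
    ring
  rw [e, mul_div_mul_right _ _ h2, mul_div_mul_right _ _ h4]
  ring

lemma s18_alg2 (B C Q R y z : ℂ) (h4 : z + y ≠ 0) :
    -Complex.I * ((0:ℂ) - C / ((z - y) * (z + y))) * (y * Q)
      + -Complex.I * ((0:ℂ) - z * C / ((z - y) * (z + y))) * Q
      - y * B * (Complex.I * ((0:ℂ) - R / ((z - y) * (z + y))))
      - B * (Complex.I * ((0:ℂ) - z * R / ((z - y) * (z + y))))
    = Complex.I * ((B * R + C * Q) / (z - y) - 0) := by
  have e : -Complex.I * ((0:ℂ) - C / ((z - y) * (z + y))) * (y * Q)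
      + -Complex.I * ((0:ℂ) - z * C / ((z - y) * (z + y))) * Q
      - y * B * (Complex.I * ((0:ℂ) - R / ((z - y) * (z + y))))
      - B * (Complex.I * ((0:ℂ) - z * R / ((z - y) * (z + y))))
      = (Complex.I * (B * R + C * Q) * (z + y)) / ((z - y) * (z + y)) := by
    ring
  rw [e, mul_div_mul_right _ _ h4]
  ring

lemma s18_fmono (hf0 : ∀ n, 0 ≤ f n) (hK : MemKminus (fsq f)) : StrictMono f := by
  intro a b hab
  have h2 := s18_Fmono hK hab
  simp only [fsq] at h2
  nlinarith [hf0 a, hf0 b]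

lemma s18_ftop (hf0 : ∀ n, 0 ≤ f n) (hK : MemKminus (fsq f)) : Tendsto f atTop atTop := by
  apply tendsto_atTop_atTop_of_monotone (s18_fmono hf0 hK).monotone
  intro b
  have := (s18_Ftop hK).eventually_ge_atTop ((max b 0 + 1) ^ 2)
  obtain ⟨a, ha⟩ := this.exists
  refine ⟨a, ?_⟩
  have h1 : (max b 0 + 1) ^ 2 ≤ f a ^ 2 := by simpa [fsq] using ha
  have h2 : 0 ≤ max b 0 + 1 := by positivity
  have h3 : max b 0 + 1 ≤ f a := by nlinarith [hf0 a]
  have h4 : b ≤ max b 0 := le_max_left _ _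
  linarith

set_option maxHeartbeats 2000000 in
lemma s18_dN (hf0 : ∀ n, 0 ≤ f n) (hK : MemKminus (fsq f)) (m : ℕ) (φ ψ : ℕ → ℂ) (N : ℕ) :
    s18_d f m φ ψ N = Complex.I * ∑ k ∈ Finset.Icc 1 m,
      (s18_w f φ ψ k N - if k ≤ N then s18_w f φ ψ k (N - k) else 0) := by
  have hmono : StrictMono f := s18_fmono hf0 hK
  simp only [s18_d, TfmSeq, mulSeq, map_mul, Complex.conj_I, map_sum, map_sub, map_div₀,
    map_zero, apply_ite (starRingEnd ℂ), Complex.conj_ofReal]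
  simp only [neg_mul, Finset.mul_sum, Finset.sum_mul, ← Finset.sum_neg_distrib,
    ← Finset.sum_add_distrib, ← Finset.sum_sub_distrib]
  apply Finset.sum_congr rfl
  intro k hk
  simp only [Finset.mem_Icc] at hk
  have h1k : 1 ≤ k := hk.1
  -- nonzero denominators
  have hlt1 : f N < f (N + k) := hmono (by omega)
  have hd1 : ((f (N + k) : ℝ) : ℂ) - ((f N : ℝ) : ℂ) ≠ 0 := by
    rw [← Complex.ofReal_sub]
    exact Complex.ofReal_ne_zero.mpr (by linarith)
  have hs1 : ((f (N + k) : ℝ) : ℂ) + ((f N : ℝ) : ℂ) ≠ 0 := by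
    rw [← Complex.ofReal_add]
    exact Complex.ofReal_ne_zero.mpr (by nlinarith [hf0 N, hf0 (N + k)])
  have hq1 : ((f (N + k) : ℝ) : ℂ) ^ 2 - ((f N : ℝ) : ℂ) ^ 2 ≠ 0 := by
    rw [← Complex.ofReal_pow, ← Complex.ofReal_pow, ← Complex.ofReal_sub]
    have := s18_Fmono hK (show N < N + k by omega)
    simp only [fsq] at this
    exact Complex.ofReal_ne_zero.mpr (by linarith)
  by_cases hkN : k ≤ N
  · have hNk : N - k + k = N := by omega
    have hlt2 : f (N - k) < f N := hmono (by omega)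
    have hd2 : ((f N : ℝ) : ℂ) - ((f (N - k) : ℝ) : ℂ) ≠ 0 := by
      rw [← Complex.ofReal_sub]
      exact Complex.ofReal_ne_zero.mpr (by linarith)
    have hs2 : ((f N : ℝ) : ℂ) + ((f (N - k) : ℝ) : ℂ) ≠ 0 := by
      rw [← Complex.ofReal_add]
      exact Complex.ofReal_ne_zero.mpr (by nlinarith [hf0 N, hf0 (N - k)])
    have hq2 : ((f N : ℝ) : ℂ) ^ 2 - ((f (N - k) : ℝ) : ℂ) ^ 2 ≠ 0 := by
      rw [← Complex.ofReal_pow, ← Complex.ofReal_pow, ← Complex.ofReal_sub]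
      have := s18_Fmono hK (show N - k < N by omega)
      simp only [fsq] at this
      exact Complex.ofReal_ne_zero.mpr (by linarith)
    simp only [if_pos hkN, s18_w, hNk, fsq]
    push_cast
    rw [show ((f (N + k) : ℝ) : ℂ) ^ 2 - ((f N : ℝ) : ℂ) ^ 2
        = (((f (N + k) : ℝ) : ℂ) - ((f N : ℝ) : ℂ)) * (((f (N + k) : ℝ) : ℂ) + ((f N : ℝ) : ℂ))
        from by ring,
      show ((f N : ℝ) : ℂ) ^ 2 - ((f (N - k) : ℝ) : ℂ) ^ 2
        = (((f N : ℝ) : ℂ) - ((f (N - k) : ℝ) : ℂ)) * (((f N : ℝ) : ℂ) + ((f (N - k) : ℝ) : ℂ))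
        from by ring]
    linear_combination s18_alg1 ((starRingEnd ℂ) (φ (N - k))) ((starRingEnd ℂ) (φ N))
      ((starRingEnd ℂ) (φ (N + k))) (ψ (N - k)) (ψ N) (ψ (N + k))
      ((f (N - k) : ℝ) : ℂ) ((f N : ℝ) : ℂ) ((f (N + k) : ℝ) : ℂ) hs2 hs1
  · simp only [if_neg hkN, s18_w, fsq]
    push_cast
    field_simp
    ring

end Part2
section Part2b

variable {f : ℕ → ℝ}

lemma s18_step (hf0 : ∀ n, 0 ≤ f n) (hK : MemKminus (fsq f)) (m : ℕ) (φ ψ : ℕ → ℂ) (N : ℕ) :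
    s18_B f m φ ψ (N + 1) = s18_B f m φ ψ N + s18_d f m φ ψ N := by
  rw [s18_dN hf0 hK]
  simp only [s18_B]
  rw [← mul_add]
  congr 1
  rw [← Finset.sum_add_distrib]
  apply Finset.sum_congr rfl
  intro k hk
  simp only [Finset.mem_Icc] at hk
  have h1 : N + 1 - k ≤ N := by omega
  rw [Finset.sum_Ico_succ_top h1]
  by_cases hkN : k ≤ N
  · rw [if_pos hkN]
    have h2 : N - k < N := by omega
    rw [Finset.sum_eq_sum_Ico_succ_bot h2]
    rw [show N - k + 1 = N + 1 - k from by omega]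
    ring
  · rw [if_neg hkN, show N + 1 - k = N - k from by omega]
    ring

lemma s18_partial (hf0 : ∀ n, 0 ≤ f n) (hK : MemKminus (fsq f)) (m : ℕ) (φ ψ : ℕ → ℂ) :
    ∀ N, ∑ n ∈ Finset.range N, s18_d f m φ ψ n = s18_B f m φ ψ N := by
  intro N
  induction N with
  | zero => simp [s18_B]
  | succ N ih => rw [Finset.sum_range_succ, ih, s18_step hf0 hK]

lemma s18_carl {g : ℕ → ℝ} (hmono : Monotone g) (htop : Tendsto g atTop atTop)
    {C : ℕ → ℂ} {L : ℂ} (hC : Tendsto C atTop (𝓝 L)) {K : ℝ}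
    (hb : ∀ M, ∑ j ∈ Finset.range M, (g (j + 1) - g j) * ‖C (j + 1)‖ ≤ K) : L = 0 := by
  by_contra hL
  have hpos : 0 < ‖L‖ := norm_pos_iff.mpr hL
  have hev : ∀ᶠ N in atTop, ‖L‖ / 2 < ‖C N‖ :=
    hC.norm.eventually (eventually_gt_nhds (by linarith))
  obtain ⟨N₀, hN₀⟩ := eventually_atTop.1 hev
  obtain ⟨M, hM2, hM1⟩ :=
    ((htop.eventually_ge_atTop (g N₀ + (2 * |K| + 2) / (‖L‖ / 2))).and
      (eventually_ge_atTop N₀)).exists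
  have htel : ∑ j ∈ Finset.Ico N₀ M, (g (j + 1) - g j) = g M - g N₀ := by
    rw [Finset.sum_Ico_eq_sub _ hM1, Finset.sum_range_sub, Finset.sum_range_sub]
    ring
  have hstep1 : ∑ j ∈ Finset.Ico N₀ M, (g (j + 1) - g j) * (‖L‖ / 2)
      ≤ ∑ j ∈ Finset.Ico N₀ M, (g (j + 1) - g j) * ‖C (j + 1)‖ := by
    apply Finset.sum_le_sum
    intro j hj
    simp only [Finset.mem_Ico] at hj
    have h1 : 0 ≤ g (j + 1) - g j := by
      have := hmono (Nat.le_succ j); linarith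
    apply mul_le_mul_of_nonneg_left _ h1
    exact (hN₀ (j + 1) (by omega)).le
  have hstep2 : ∑ j ∈ Finset.Ico N₀ M, (g (j + 1) - g j) * ‖C (j + 1)‖
      ≤ ∑ j ∈ Finset.range M, (g (j + 1) - g j) * ‖C (j + 1)‖ := by
    apply Finset.sum_le_sum_of_subset_of_nonneg
    · intro j hj
      simp only [Finset.mem_Ico] at hj
      simp only [Finset.mem_range]
      omega
    · intro j _ _
      exact mul_nonneg (by linarith [hmono (Nat.le_succ j)]) (norm_nonneg _)
  have hts : ∑ j ∈ Finset.Ico N₀ M, (g (j + 1) - g j) * (‖L‖ / 2)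
      = (g M - g N₀) * (‖L‖ / 2) := by
    rw [← Finset.sum_mul, htel]
  have hlow : (2 * |K| + 2) ≤ (g M - g N₀) * (‖L‖ / 2) := by
    have h2 : (2 * |K| + 2) / (‖L‖ / 2) ≤ g M - g N₀ := by linarith
    have h3 : 0 < ‖L‖ / 2 := by linarith
    calc (2 * |K| + 2) = (2 * |K| + 2) / (‖L‖ / 2) * (‖L‖ / 2) :=
          (div_mul_cancel₀ _ h3.ne').symm
      _ ≤ (g M - g N₀) * (‖L‖ / 2) := mul_le_mul_of_nonneg_right h2 h3.le
  have hchain : (g M - g N₀) * (‖L‖ / 2) ≤ K := by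
    rw [← hts]
    linarith [hb M]
  have hKabs : K ≤ |K| := le_abs_self K
  have habs0 : 0 ≤ |K| := abs_nonneg K
  linarith

lemma s18_summable_prod_shift {φ ψ : ℕ → ℂ} (hφ : Summable fun n => ‖φ n‖ ^ 2)
    (hψ : Summable fun n => ‖ψ n‖ ^ 2) (k : ℕ) :
    Summable fun a => ‖φ a‖ * ‖ψ (a + k)‖ + ‖φ (a + k)‖ * ‖ψ a‖ := by
  have hψk : Summable fun a => ‖ψ (a + k)‖ ^ 2 :=
    (summable_nat_add_iff (f := fun n => ‖ψ n‖ ^ 2) k).2 hψ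
  have hφk : Summable fun a => ‖φ (a + k)‖ ^ 2 :=
    (summable_nat_add_iff (f := fun n => ‖φ n‖ ^ 2) k).2 hφ
  have h1 : Summable fun a => ‖φ a‖ * ‖ψ (a + k)‖ := by
    apply Summable.of_nonneg_of_le (fun a => by positivity) (fun a => ?_)
      ((hφ.add hψk).div_const 2)
    nlinarith [sq_nonneg (‖φ a‖ - ‖ψ (a + k)‖)]
  have h2 : Summable fun a => ‖φ (a + k)‖ * ‖ψ a‖ := by
    apply Summable.of_nonneg_of_le (fun a => by positivity) (fun a => ?_)
      ((hφk.add hψ).div_const 2)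
    nlinarith [sq_nonneg (‖φ (a + k)‖ - ‖ψ a‖)]
  exact h1.add h2

lemma s18_bound_k (hf0 : ∀ n, 0 ≤ f n) (hK : MemKminus (fsq f)) {φ ψ : ℕ → ℂ}
    (hφ : Summable fun n => ‖φ n‖ ^ 2) (hψ : Summable fun n => ‖ψ n‖ ^ 2)
    {k : ℕ} (hk : 1 ≤ k) (M : ℕ) :
    ∑ j ∈ Finset.range M, ∑ a ∈ Finset.Ico (j + 1 - k) (j + 1),
        (f (j + 1) - f j) * ‖s18_w f φ ψ k a‖
      ≤ ∑' a, (‖φ a‖ * ‖ψ (a + k)‖ + ‖φ (a + k)‖ * ‖ψ a‖) := by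
  have hmono := s18_fmono hf0 hK
  have hgpos : ∀ j, 0 ≤ f (j + 1) - f j := fun j => by
    have := hmono.monotone (Nat.le_succ j); linarith
  have e1 : ∀ j ∈ Finset.range M, ∑ a ∈ Finset.Ico (j + 1 - k) (j + 1),
      (f (j + 1) - f j) * ‖s18_w f φ ψ k a‖
      = ∑ a ∈ Finset.range M, if a ∈ Finset.Ico (j + 1 - k) (j + 1) then
          (f (j + 1) - f j) * ‖s18_w f φ ψ k a‖ else 0 := by
    intro j hj
    simp only [Finset.mem_range] at hj
    rw [Finset.sum_ite_mem]
    congr 1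
    symm
    rw [Finset.inter_eq_right]
    intro a ha
    simp only [Finset.mem_Ico] at ha
    simp only [Finset.mem_range]
    omega
  rw [Finset.sum_congr rfl e1, Finset.sum_comm]
  have e2 : ∀ a ∈ Finset.range M, ∑ j ∈ Finset.range M,
      (if a ∈ Finset.Ico (j + 1 - k) (j + 1) then (f (j + 1) - f j) * ‖s18_w f φ ψ k a‖ else 0)
      ≤ ‖φ a‖ * ‖ψ (a + k)‖ + ‖φ (a + k)‖ * ‖ψ a‖ := by
    intro a _
    have e3 : ∀ j ∈ Finset.range M,
        (if a ∈ Finset.Ico (j + 1 - k) (j + 1) then (f (j + 1) - f j) * ‖s18_w f φ ψ k a‖ else 0)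
        = if j ∈ Finset.Ico a (a + k) then (f (j + 1) - f j) * ‖s18_w f φ ψ k a‖ else 0 := by
      intro j _
      apply if_congr _ rfl rfl
      simp only [Finset.mem_Ico]
      omega
    rw [Finset.sum_congr rfl e3, Finset.sum_ite_mem]
    have step1 : ∑ j ∈ Finset.range M ∩ Finset.Ico a (a + k),
        (f (j + 1) - f j) * ‖s18_w f φ ψ k a‖
        ≤ ∑ j ∈ Finset.Ico a (a + k), (f (j + 1) - f j) * ‖s18_w f φ ψ k a‖ := by
      apply Finset.sum_le_sum_of_subset_of_nonneg Finset.inter_subset_right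
      intro j _ _
      have := hgpos j
      positivity
    have step2 : ∑ j ∈ Finset.Ico a (a + k), (f (j + 1) - f j) * ‖s18_w f φ ψ k a‖
        = (f (a + k) - f a) * ‖s18_w f φ ψ k a‖ := by
      rw [← Finset.sum_mul]
      congr 1
      rw [Finset.sum_Ico_eq_sub _ (by omega : a ≤ a + k), Finset.sum_range_sub,
        Finset.sum_range_sub]
      ring
    have hlt : f a < f (a + k) := hmono (by omega)
    have step3 : (f (a + k) - f a) * ‖s18_w f φ ψ k a‖
        ≤ ‖φ a‖ * ‖ψ (a + k)‖ + ‖φ (a + k)‖ * ‖ψ a‖ := by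
      have hnw : ‖s18_w f φ ψ k a‖
          = ‖(starRingEnd ℂ) (φ a) * ψ (a + k) + (starRingEnd ℂ) (φ (a + k)) * ψ a‖
            / (f (a + k) - f a) := by
        rw [s18_w, norm_div, Complex.norm_real, Real.norm_eq_abs,
          abs_of_pos (by linarith : (0:ℝ) < f (a + k) - f a)]
      rw [hnw, mul_div_cancel₀ _ (by linarith : f (a + k) - f a ≠ 0)]
      calc ‖(starRingEnd ℂ) (φ a) * ψ (a + k) + (starRingEnd ℂ) (φ (a + k)) * ψ a‖
          ≤ ‖(starRingEnd ℂ) (φ a) * ψ (a + k)‖ + ‖(starRingEnd ℂ) (φ (a + k)) * ψ a‖ :=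
            norm_add_le _ _
        _ = ‖φ a‖ * ‖ψ (a + k)‖ + ‖φ (a + k)‖ * ‖ψ a‖ := by
            rw [norm_mul, norm_mul, RCLike.norm_conj, RCLike.norm_conj]
    calc _ ≤ _ := step1
      _ = _ := step2
      _ ≤ _ := step3
  calc ∑ a ∈ Finset.range M, ∑ j ∈ Finset.range M,
        (if a ∈ Finset.Ico (j + 1 - k) (j + 1) then (f (j + 1) - f j) * ‖s18_w f φ ψ k a‖ else 0)
      ≤ ∑ a ∈ Finset.range M, (‖φ a‖ * ‖ψ (a + k)‖ + ‖φ (a + k)‖ * ‖ψ a‖) :=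
        Finset.sum_le_sum e2
    _ ≤ ∑' a, (‖φ a‖ * ‖ψ (a + k)‖ + ‖φ (a + k)‖ * ‖ψ a‖) := by
        apply Summable.sum_le_tsum _ (fun a _ => by positivity)
          (s18_summable_prod_shift hφ hψ k)

lemma s18_bound (hf0 : ∀ n, 0 ≤ f n) (hK : MemKminus (fsq f)) {φ ψ : ℕ → ℂ}
    (hφ : Summable fun n => ‖φ n‖ ^ 2) (hψ : Summable fun n => ‖ψ n‖ ^ 2) (m : ℕ) (M : ℕ) :
    ∑ j ∈ Finset.range M, (f (j + 1) - f j) * ‖s18_B f m φ ψ (j + 1)‖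
      ≤ ∑ k ∈ Finset.Icc 1 m, ∑' a, (‖φ a‖ * ‖ψ (a + k)‖ + ‖φ (a + k)‖ * ‖ψ a‖) := by
  have hmono := s18_fmono hf0 hK
  have hgpos : ∀ j, 0 ≤ f (j + 1) - f j := fun j => by
    have := hmono.monotone (Nat.le_succ j); linarith
  have e1 : ∀ j ∈ Finset.range M, (f (j + 1) - f j) * ‖s18_B f m φ ψ (j + 1)‖
      ≤ ∑ k ∈ Finset.Icc 1 m, ∑ a ∈ Finset.Ico (j + 1 - k) (j + 1),
          (f (j + 1) - f j) * ‖s18_w f φ ψ k a‖ := by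
    intro j _
    have h1 : ‖s18_B f m φ ψ (j + 1)‖
        ≤ ∑ k ∈ Finset.Icc 1 m, ∑ a ∈ Finset.Ico (j + 1 - k) (j + 1), ‖s18_w f φ ψ k a‖ := by
      rw [s18_B, norm_mul, Complex.norm_I, one_mul]
      calc ‖∑ k ∈ Finset.Icc 1 m, ∑ a ∈ Finset.Ico (j + 1 - k) (j + 1), s18_w f φ ψ k a‖
          ≤ ∑ k ∈ Finset.Icc 1 m, ‖∑ a ∈ Finset.Ico (j + 1 - k) (j + 1), s18_w f φ ψ k a‖ :=
            norm_sum_le _ _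
        _ ≤ ∑ k ∈ Finset.Icc 1 m, ∑ a ∈ Finset.Ico (j + 1 - k) (j + 1), ‖s18_w f φ ψ k a‖ :=
            Finset.sum_le_sum (fun k _ => norm_sum_le _ _)
    calc (f (j + 1) - f j) * ‖s18_B f m φ ψ (j + 1)‖
        ≤ (f (j + 1) - f j) * ∑ k ∈ Finset.Icc 1 m, ∑ a ∈ Finset.Ico (j + 1 - k) (j + 1),
            ‖s18_w f φ ψ k a‖ := mul_le_mul_of_nonneg_left h1 (hgpos j)
      _ = ∑ k ∈ Finset.Icc 1 m, ∑ a ∈ Finset.Ico (j + 1 - k) (j + 1),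
            (f (j + 1) - f j) * ‖s18_w f φ ψ k a‖ := by
          rw [Finset.mul_sum]
          apply Finset.sum_congr rfl
          intro k _
          rw [Finset.mul_sum]
  calc ∑ j ∈ Finset.range M, (f (j + 1) - f j) * ‖s18_B f m φ ψ (j + 1)‖
      ≤ ∑ j ∈ Finset.range M, ∑ k ∈ Finset.Icc 1 m, ∑ a ∈ Finset.Ico (j + 1 - k) (j + 1),
          (f (j + 1) - f j) * ‖s18_w f φ ψ k a‖ := Finset.sum_le_sum e1
    _ = ∑ k ∈ Finset.Icc 1 m, ∑ j ∈ Finset.range M, ∑ a ∈ Finset.Ico (j + 1 - k) (j + 1),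
          (f (j + 1) - f j) * ‖s18_w f φ ψ k a‖ := Finset.sum_comm
    _ ≤ ∑ k ∈ Finset.Icc 1 m, ∑' a, (‖φ a‖ * ‖ψ (a + k)‖ + ‖φ (a + k)‖ * ‖ψ a‖) := by
        apply Finset.sum_le_sum
        intro k hk
        simp only [Finset.mem_Icc] at hk
        exact s18_bound_k hf0 hK hφ hψ hk.1 M

end Part2b
section Part2c

lemma s18_inner_eq (x y : l2) :
    (inner ℂ x y : ℂ) = ∑' n, (starRingEnd ℂ) ((⇑x : ℕ → ℂ) n) * (⇑y : ℕ → ℂ) n := by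
  rw [lp.inner_eq_tsum]
  apply tsum_congr
  intro n
  rw [RCLike.inner_apply, mul_comm]

lemma s18_hasSum_inner (x y : l2) :
    HasSum (fun n => (starRingEnd ℂ) ((⇑x : ℕ → ℂ) n) * (⇑y : ℕ → ℂ) n) (inner ℂ x y : ℂ) := by
  have := lp.hasSum_inner (𝕜 := ℂ) x y
  simpa [RCLike.inner_apply, mul_comm] using this

lemma s18_inner_mulSeq (f : ℕ → ℝ) (x y : l2) (hx : Memℓp (mulSeq f ⇑x) 2)
    (hy : Memℓp (mulSeq f ⇑y) 2) :
    (inner ℂ (⟨mulSeq f ⇑x, hx⟩ : l2) y : ℂ) = inner ℂ x (⟨mulSeq f ⇑y, hy⟩ : l2) := by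
  rw [s18_inner_eq, s18_inner_eq]
  apply tsum_congr
  intro n
  show (starRingEnd ℂ) (mulSeq f (⇑x) n) * (⇑y) n
      = (starRingEnd ℂ) ((⇑x) n) * mulSeq f (⇑y) n
  simp only [mulSeq, map_mul, Complex.conj_ofReal]
  ring

variable {f : ℕ → ℝ}

lemma s18_core (hf0 : ∀ n, 0 ≤ f n) (hK : MemKminus (fsq f)) (m : ℕ) (φ ψ : l2)
    (hφm : Memℓp (TfmSeq (fsq f) m ⇑φ) 2)
    (hφFm : Memℓp (TfmSeq (fsq f) m (mulSeq f ⇑φ)) 2)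
    (hψm : Memℓp (TfmSeq (fsq f) m ⇑ψ) 2)
    (hψFm : Memℓp (TfmSeq (fsq f) m (mulSeq f ⇑ψ)) 2)
    (hFφ : Memℓp (mulSeq f ⇑φ) 2) (hFψ : Memℓp (mulSeq f ⇑ψ) 2) :
    (inner ℂ (⟨TfmSeq (fsq f) m ⇑φ, hφm⟩ : l2) (⟨mulSeq f ⇑ψ, hFψ⟩ : l2) : ℂ)
      + inner ℂ (⟨TfmSeq (fsq f) m (mulSeq f ⇑φ), hφFm⟩ : l2) ψ
    = inner ℂ (⟨mulSeq f ⇑φ, hFφ⟩ : l2) (⟨TfmSeq (fsq f) m ⇑ψ, hψm⟩ : l2)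
      + inner ℂ φ (⟨TfmSeq (fsq f) m (mulSeq f ⇑ψ), hψFm⟩ : l2) := by
  have h1 := s18_hasSum_inner (⟨TfmSeq (fsq f) m ⇑φ, hφm⟩ : l2) (⟨mulSeq f ⇑ψ, hFψ⟩ : l2)
  have h2 := s18_hasSum_inner (⟨TfmSeq (fsq f) m (mulSeq f ⇑φ), hφFm⟩ : l2) ψ
  have h3 := s18_hasSum_inner (⟨mulSeq f ⇑φ, hFφ⟩ : l2) (⟨TfmSeq (fsq f) m ⇑ψ, hψm⟩ : l2)
  have h4 := s18_hasSum_inner φ (⟨TfmSeq (fsq f) m (mulSeq f ⇑ψ), hψFm⟩ : l2)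
  have hd : HasSum (s18_d f m ⇑φ ⇑ψ)
      ((((inner ℂ (⟨TfmSeq (fsq f) m ⇑φ, hφm⟩ : l2) (⟨mulSeq f ⇑ψ, hFψ⟩ : l2) : ℂ)
        + inner ℂ (⟨TfmSeq (fsq f) m (mulSeq f ⇑φ), hφFm⟩ : l2) ψ)
        - inner ℂ (⟨mulSeq f ⇑φ, hFφ⟩ : l2) (⟨TfmSeq (fsq f) m ⇑ψ, hψm⟩ : l2))
        - inner ℂ φ (⟨TfmSeq (fsq f) m (mulSeq f ⇑ψ), hψFm⟩ : l2)) := by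
    have h := ((h1.add h2).sub h3).sub h4
    exact h
  have hT := hd.tendsto_sum_nat
  simp only [s18_partial hf0 hK m (⇑φ) (⇑ψ)] at hT
  have hzero := s18_carl (s18_fmono hf0 hK).monotone (s18_ftop hf0 hK) hT
    (fun M => s18_bound hf0 hK (s18_sq_of_memℓp (lp.memℓp φ)) (s18_sq_of_memℓp (lp.memℓp ψ)) m M)
  linear_combination hzero

lemma s18_part2_main (hf0 : ∀ n, 0 ≤ f n) (hf : MemKminus (fsq f)) :
    ∀ φ ψ Sφ Sψ : l2, InGraphS f φ Sφ → InGraphS f ψ Sψ →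
      (inner ℂ Sφ ψ : ℂ) = inner ℂ φ Sψ := by
  rintro φ ψ Sφ Sψ
    ⟨T2φ, T2Fφ, hFφ, hFTφ, ⟨hφm, hφt⟩, ⟨hφFm, hφFt⟩, rfl⟩
    ⟨T2ψ, T2Fψ, hFψ, hFTψ, ⟨hψm, hψt⟩, ⟨hψFm, hψFt⟩, rfl⟩
  have ha : Tendsto (fun m =>
      (inner ℂ (⟨TfmSeq (fsq f) m ⇑φ, hφm m⟩ : l2) (⟨mulSeq f ⇑ψ, hFψ⟩ : l2) : ℂ)
        + inner ℂ (⟨TfmSeq (fsq f) m ⇑(⟨mulSeq f ⇑φ, hFφ⟩ : l2), hφFm m⟩ : l2) ψ) atTop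
      (𝓝 ((inner ℂ T2φ (⟨mulSeq f ⇑ψ, hFψ⟩ : l2) : ℂ) + inner ℂ T2Fφ ψ)) :=
    (hφt.inner tendsto_const_nhds).add (hφFt.inner tendsto_const_nhds)
  have hb : Tendsto (fun m =>
      (inner ℂ (⟨mulSeq f ⇑φ, hFφ⟩ : l2) (⟨TfmSeq (fsq f) m ⇑ψ, hψm m⟩ : l2) : ℂ)
        + inner ℂ φ (⟨TfmSeq (fsq f) m ⇑(⟨mulSeq f ⇑ψ, hFψ⟩ : l2), hψFm m⟩ : l2)) atTop
      (𝓝 ((inner ℂ (⟨mulSeq f ⇑φ, hFφ⟩ : l2) T2ψ : ℂ) + inner ℂ φ T2Fψ)) :=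
    ((tendsto_const_nhds (x := (⟨mulSeq f ⇑φ, hFφ⟩ : l2))).inner hψt).add
      ((tendsto_const_nhds (x := φ)).inner hψFt)
  have heq : ∀ m,
      (inner ℂ (⟨TfmSeq (fsq f) m ⇑φ, hφm m⟩ : l2) (⟨mulSeq f ⇑ψ, hFψ⟩ : l2) : ℂ)
        + inner ℂ (⟨TfmSeq (fsq f) m ⇑(⟨mulSeq f ⇑φ, hFφ⟩ : l2), hφFm m⟩ : l2) ψ
      = inner ℂ (⟨mulSeq f ⇑φ, hFφ⟩ : l2) (⟨TfmSeq (fsq f) m ⇑ψ, hψm m⟩ : l2)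
        + inner ℂ φ (⟨TfmSeq (fsq f) m ⇑(⟨mulSeq f ⇑ψ, hFψ⟩ : l2), hψFm m⟩ : l2) := by
    intro m
    exact s18_core hf0 hf m φ ψ (hφm m) (hφFm m) (hψm m) (hψFm m) hFφ hFψ
  have hlim : (inner ℂ T2φ (⟨mulSeq f ⇑ψ, hFψ⟩ : l2) : ℂ) + inner ℂ T2Fφ ψ
      = (inner ℂ (⟨mulSeq f ⇑φ, hFφ⟩ : l2) T2ψ : ℂ) + inner ℂ φ T2Fψ :=
    tendsto_nhds_unique (ha.congr heq) hb
  rw [inner_add_left, inner_add_right]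
  rw [s18_inner_mulSeq f T2φ ψ hFTφ hFψ]
  rw [show (inner ℂ φ (⟨mulSeq f ⇑T2ψ, hFTψ⟩ : l2) : ℂ)
      = inner ℂ (⟨mulSeq f ⇑φ, hFφ⟩ : l2) T2ψ from (s18_inner_mulSeq f φ T2ψ hFφ hFTψ).symm]
  exact hlim

end Part2c
/-- Let `f : ℕ → ℝ` be nonnegative with `f² ∈ 𝒦⁻`. Then every `φ` in the
span of `{ξ_n - ξ_{n+1}}` lies in `D(f(N)² T_{f²}) ∩ D(T_{f²} f(N))`; moreover the operator
`f(N) T_{f²} + T_{f²} f(N)`, with domain `D(f(N) T_{f²}) ∩ D(T_{f²} f(N))`, is symmetric. -/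
theorem stmt18 (f : ℕ → ℝ) (hf0 : ∀ n, 0 ≤ f n) (hf : MemKminus (fsq f)) :
    (∀ φ : l2, φ ∈ Submodule.span ℂ (Set.range fun n : ℕ => xi n - xi (n + 1)) →
      (∃ Tφ : l2, InGraphTf (fsq f) φ Tφ ∧ Memℓp (mulSeq (fsq f) ⇑Tφ) 2) ∧
      (∃ hF : Memℓp (mulSeq f ⇑φ) 2, ∃ ψ : l2, InGraphTf (fsq f) (⟨mulSeq f ⇑φ, hF⟩ : l2) ψ)) ∧
    (∀ φ ψ Sφ Sψ : l2, InGraphS f φ Sφ → InGraphS f ψ Sψ →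
      (inner ℂ Sφ ψ : ℂ) = inner ℂ φ Sψ) := by
  exact ⟨s18_part1_main f hf, s18_part2_main hf0 hf⟩
end
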